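/- Let Ω ⊆ Z^N be a sublattice of rank J ≥ 1, and let U_0 be a real subspace of R^N that does not contain Ω. Then there exists x ∈ Ω \ U_0 with max_i |x_i| ≤ (2 J^J (3/2)^{J−1} + J) H(Ω). -/

import Mathlib

open Matrix

/-- The height `H(Λ)` of a sublattice of `ℤ^N`: the maximum of the absolute
values of the Grassmann coordinates (maximal minors of a basis matrix). -/
noncomputable def latticeHeight {N : ℕ} (Λ : Submodule ℤ (Fin N → ℤ)) : ℕ :=
  letI := Classical.decEq (Module.Free.ChooseBasisIndex ℤ Λ)
  let b := Module.Free.chooseBasis ℤ Λ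
  Finset.univ.sup fun f : Module.Free.ChooseBasisIndex ℤ Λ → Fin N =>
    (Matrix.det (Matrix.of fun i j => ((b j : Fin N → ℤ) (f i)))).natAbs

private def intCastPi {N : ℕ} (R : Type*) [Ring R] : (Fin N → ℤ) →ₗ[ℤ] (Fin N → R) where
  toFun x := fun i => (x i : R)
  map_add' x y := by funext i; simp
  map_smul' c x := by
    funext i
    simp only [Pi.smul_apply, smul_eq_mul, RingHom.id_apply, zsmul_eq_mul]
    push_cast
    ring_nf

private lemma exists_minor_ne_zero {N : ℕ} {ι : Type*} [Fintype ι] [DecidableEq ι]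
    (v : ι → (Fin N → ℤ)) (hv : LinearIndependent ℤ v) :
    ∃ f : ι → Fin N, (Matrix.det (Matrix.of fun i j => v j (f i))) ≠ 0 := by
  have hinj : Function.Injective (intCastPi (N := N) ℚ) := by
    intro x y h
    funext i
    have := congrFun h i
    simpa [intCastPi] using this
  have hvq : LinearIndependent ℚ (fun j => (intCastPi (N := N) ℚ) (v j)) := by
    rw [← LinearIndependent.iff_fractionRing ℤ ℚ]
    exact hv.map' _ (LinearMap.ker_eq_bot.mpr hinj)
  set A : Matrix ι (Fin N) ℚ := Matrix.of fun j k => ((v j k : ℚ)) with hA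
  have hAr : (fun j => (intCastPi (N := N) ℚ) (v j)) = (fun j => A j) := rfl
  rw [hAr] at hvq
  have hrank : A.rank = Fintype.card ι := hvq.rank_matrix
  have hspan : Submodule.span ℚ (Set.range Aᵀ) = ⊤ := by
    apply Submodule.eq_top_of_finrank_eq
    rw [show Set.range Aᵀ = Set.range A.col from rfl, ← Matrix.rank_eq_finrank_span_cols, hrank, Module.finrank_pi]
  obtain ⟨t, hts, htspan, htli⟩ := exists_linearIndependent ℚ (Set.range Aᵀ)
  rw [hspan] at htspan
  have hbt : Module.Basis t ℚ (ι → ℚ) :=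
    Module.Basis.mk htli (by rw [Subtype.range_coe, htspan])
  haveI : Fintype t := FiniteDimensional.fintypeBasisIndex hbt
  have hcardt : Fintype.card t = Fintype.card ι := by
    have := Module.finrank_eq_card_basis hbt
    rw [Module.finrank_pi] at this
    omega
  let e : ι ≃ t := (Fintype.equivOfCardEq hcardt.symm)
  have hchoose : ∀ i : ι, ∃ k : Fin N, Aᵀ k = ((e i : t) : ι → ℚ) := by
    intro i
    have : ((e i : t) : ι → ℚ) ∈ Set.range Aᵀ := hts (e i).2
    obtain ⟨k, hk⟩ := this
    exact ⟨k, hk⟩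
  choose g hg using hchoose
  refine ⟨g, ?_⟩
  intro h0
  set Q : Matrix ι ι ℚ := Matrix.of fun i j => A j (g i) with hQ
  have hrows : (fun i => Q i) = ((↑) : t → ι → ℚ) ∘ e := by
    funext i
    show Q i = ((e i : t) : ι → ℚ)
    rw [← hg i]
    rfl
  have hQli : LinearIndependent ℚ (fun i => Q i) := by
    rw [hrows]
    exact htli.comp e e.injective
  have hQunit : IsUnit Q := Matrix.linearIndependent_rows_iff_isUnit.mp hQli
  have hQdet : Q.det ≠ 0 := by
    have := Matrix.isUnit_iff_isUnit_det Q |>.mp hQunit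
    exact this.ne_zero
  apply hQdet
  have hmap : Q = (Matrix.of fun i j => v j (g i)).map (Int.cast : ℤ → ℚ) := rfl
  rw [hmap]
  rw [show (Matrix.of fun i j => v j (g i)).map (Int.cast : ℤ → ℚ)
      = (Int.castRingHom ℚ).mapMatrix (Matrix.of fun i j => v j (g i)) from rfl]
  rw [← RingHom.map_det, h0]
  simp

private lemma key_lemma {N : ℕ} {ι : Type*} [Fintype ι] [DecidableEq ι] [Nonempty ι]
    (Ω : Submodule ℤ (Fin N → ℤ)) (v : ι → (Fin N → ℤ)) (hvΩ : ∀ j, v j ∈ Ω)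
    (hgen : ∀ ω ∈ Ω, ∃ a : ι → ℤ, ∀ k, ω k = ∑ j, a j * v j k)
    (H : ℕ) (hH1 : 1 ≤ H)
    (hminor : ∀ f : ι → Fin N, (Matrix.det (Matrix.of fun i j => v j (f i))).natAbs ≤ H)
    (f₀ : ι → Fin N) (hf₀ : (Matrix.det (Matrix.of fun i j => v j (f₀ i))).natAbs = H)
    (U₀ : Submodule ℝ (Fin N → ℝ))
    (x₀ : Fin N → ℤ) (hx₀Ω : x₀ ∈ Ω) (hx₀ : (fun i => ((x₀ i : ℤ) : ℝ)) ∉ U₀) :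
    ∃ x ∈ Ω, (fun i => ((x i : ℤ) : ℝ)) ∉ U₀ ∧ ∀ k, |x k| ≤ (Fintype.card ι : ℤ) * H := by
  set M : Matrix ι ι ℤ := Matrix.of fun i j => v j (f₀ i) with hM
  set D : ℤ := M.det with hD
  have hDabs : |D| = (H : ℤ) := by rw [Int.abs_eq_natAbs, hf₀]
  have hDne : D ≠ 0 := by
    intro h
    rw [h] at hDabs
    simp at hDabs
    omega
  have hHpos : (0 : ℤ) < (H : ℤ) := by exact_mod_cast hH1
  -- Step 1: coordinate bound
  have coordBound : ∀ ω ∈ Ω, ∀ k, |ω k| ≤ ∑ i, |ω (f₀ i)| := by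
    intro ω hω k
    obtain ⟨a, ha⟩ := hgen ω hω
    set vc : ι → ℤ := fun j => v j k with hvc
    set t : ι → ℤ := Matrix.cramer Mᵀ vc with ht
    have habs : ∀ i, |t i| ≤ (H : ℤ) := by
      intro i
      have h1 : t i = (Matrix.of fun i' j => v j (Function.update f₀ i k i')).det := by
        rw [ht]
        rw [Matrix.cramer_apply, Matrix.updateCol_transpose, Matrix.det_transpose]
        congr 1
        funext i' j
        rw [Matrix.updateRow_apply]
        by_cases h : i' = i
        · subst h
          simp [Function.update_self, hvc]
        · simp only [if_neg h, hM, Matrix.of_apply]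
          rw [Function.update_of_ne h]
      rw [h1, Int.abs_eq_natAbs]
      exact_mod_cast hminor (Function.update f₀ i k)
    have hmv : Mᵀ.mulVec t = D • vc := by
      rw [ht, Matrix.mulVec_cramer, Matrix.det_transpose]
    have hkey : D * ω k = ∑ i, ω (f₀ i) * t i := by
      have e1 : ∀ i, ω (f₀ i) = ∑ j, a j * M i j := fun i => ha (f₀ i)
      calc D * ω k = D * ∑ j, a j * vc j := by rw [ha k]
        _ = ∑ j, a j * (D • vc) j := by
            rw [Finset.mul_sum]
            refine Finset.sum_congr rfl fun j _ => ?_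
            simp only [Pi.smul_apply, smul_eq_mul]
            ring
        _ = ∑ j, a j * (Mᵀ.mulVec t) j := by rw [hmv]
        _ = ∑ j, a j * ∑ i, M i j * t i := by
            exact Finset.sum_congr rfl fun j _ => rfl
        _ = ∑ j, ∑ i, a j * (M i j * t i) := by
            refine Finset.sum_congr rfl fun j _ => ?_
            rw [Finset.mul_sum]
        _ = ∑ i, ∑ j, a j * (M i j * t i) := Finset.sum_comm
        _ = ∑ i, ω (f₀ i) * t i := by
            refine Finset.sum_congr rfl fun i _ => ?_
            rw [e1 i, Finset.sum_mul]
            refine Finset.sum_congr rfl fun j _ => ?_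
            ring
    have h2 : |D * ω k| ≤ ∑ i, |ω (f₀ i)| * (H : ℤ) := by
      rw [hkey]
      refine (Finset.abs_sum_le_sum_abs _ _).trans ?_
      refine Finset.sum_le_sum fun i _ => ?_
      rw [abs_mul]
      exact mul_le_mul_of_nonneg_left (habs i) (abs_nonneg _)
    have h3 : |ω k| * (H:ℤ) ≤ (∑ i, |ω (f₀ i)|) * (H:ℤ) := by
      calc |ω k| * (H:ℤ) = |D * ω k| := by rw [abs_mul, hDabs, mul_comm]
        _ ≤ ∑ i, |ω (f₀ i)| * (H:ℤ) := h2
        _ = (∑ i, |ω (f₀ i)|) * (H:ℤ) := (Finset.sum_mul _ _ _).symm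
    exact le_of_mul_le_mul_right h3 hHpos
  -- Step 2: the vectors w i
  have hwex : ∀ i : ι, ∃ w ∈ Ω, ∀ i', w (f₀ i') = D * (if i' = i then 1 else 0) := by
    intro i
    set u : ι → ℤ := Matrix.cramer M (Pi.single i 1) with hu
    refine ⟨∑ j, u j • v j, Submodule.sum_mem _ fun j _ => Submodule.smul_mem _ _ (hvΩ j), ?_⟩
    intro i'
    have h1 : (∑ j, u j • v j) (f₀ i') = ∑ j, M i' j * u j := by
      rw [Finset.sum_apply]
      exact Finset.sum_congr rfl fun j _ => by
        rw [Pi.smul_apply, smul_eq_mul]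
        exact mul_comm (u j) (v j (f₀ i'))
    have h2 : M.mulVec u = D • Pi.single i 1 := by rw [hu, Matrix.mulVec_cramer]
    have h3 : ∑ j, M i' j * u j = (M.mulVec u) i' := rfl
    rw [h1, h3, h2, Pi.smul_apply, smul_eq_mul, Pi.single_apply]
  choose w hwΩ hwco using hwex
  -- sign adjustment
  set ε : ℤ := if 0 ≤ D then 1 else -1 with hε
  have hεD : ε * D = (H : ℤ) := by
    rw [← hDabs, hε]
    by_cases h : 0 ≤ D
    · simp [h, abs_of_nonneg h]
    · push_neg at h
      rw [if_neg (not_le.mpr h), abs_of_neg h]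
      ring
  set w' : ι → (Fin N → ℤ) := fun i => ε • w i with hw'
  have hw'Ω : ∀ i, w' i ∈ Ω := fun i => Submodule.smul_mem _ _ (hwΩ i)
  have hw'co : ∀ i i', w' i (f₀ i') = (H : ℤ) * (if i' = i then 1 else 0) := by
    intro i i'
    rw [hw']
    simp only [Pi.smul_apply, smul_eq_mul]
    rw [hwco i i', ← mul_assoc, hεD]
  by_cases hcase : ∃ i, (fun k => ((w' i k : ℤ) : ℝ)) ∉ U₀
  · obtain ⟨i, hi⟩ := hcase
    refine ⟨w' i, hw'Ω i, hi, ?_⟩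
    intro k
    refine (coordBound _ (hw'Ω i) k).trans ?_
    have h1 : ∀ i', |w' i (f₀ i')| = if i' = i then (H : ℤ) else 0 := by
      intro i'
      rw [hw'co i i']
      by_cases h : i' = i <;> simp [h, abs_of_nonneg hHpos.le]
    rw [Finset.sum_congr rfl fun i' _ => h1 i']
    rw [Finset.sum_ite_eq' Finset.univ i fun _ => (H : ℤ)]
    simp only [Finset.mem_univ, if_true]
    have hcard : (1 : ℤ) ≤ (Fintype.card ι : ℤ) := by
      have := Fintype.card_pos (α := ι)
      exact_mod_cast this
    nlinarith
  · push_neg at hcase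
    set q : ι → ℤ := fun i => x₀ (f₀ i) / (H : ℤ) with hq
    set x : Fin N → ℤ := x₀ - ∑ i, q i • w' i with hx
    have hxΩ : x ∈ Ω := Submodule.sub_mem _ hx₀Ω
      (Submodule.sum_mem _ fun i _ => Submodule.smul_mem _ _ (hw'Ω i))
    have hxco : ∀ i', x (f₀ i') = x₀ (f₀ i') % (H : ℤ) := by
      intro i'
      rw [hx]
      simp only [Pi.sub_apply, Finset.sum_apply, Pi.smul_apply, smul_eq_mul]
      have hs : ∑ i, q i * w' i (f₀ i') = q i' * (H : ℤ) := by
        have hterm : ∀ i ∈ Finset.univ, q i * w' i (f₀ i')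
            = if i = i' then q i' * (H:ℤ) else 0 := by
          intro i _
          rw [hw'co i i']
          by_cases h : i = i'
          · subst h
            simp
          · rw [if_neg h, if_neg fun hh => h hh.symm]
            ring
        rw [Finset.sum_congr rfl hterm, Finset.sum_ite_eq' Finset.univ i' fun _ => q i' * (H:ℤ)]
        simp
      rw [hs, hq, Int.emod_def]
      ring
    refine ⟨x, hxΩ, ?_, ?_⟩
    · intro hmem
      apply hx₀
      have hsum : (fun i => ((x₀ i : ℤ) : ℝ)) =
          (fun i => ((x i : ℤ) : ℝ)) + ∑ i, q i • (fun k => ((w' i k : ℤ) : ℝ)) := by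
        funext k
        have hxk : x k = x₀ k - ∑ i, q i * w' i k := by
          rw [hx]
          simp only [Pi.sub_apply, Finset.sum_apply, Pi.smul_apply, smul_eq_mul]
        have hterm : ∀ i, (q i • fun k => ((w' i k : ℤ) : ℝ)) k
            = (q i : ℝ) * ((w' i k : ℤ) : ℝ) := by
          intro i
          simp [zsmul_eq_mul]
        rw [Pi.add_apply, Finset.sum_apply, Finset.sum_congr rfl fun i _ => hterm i, hxk]
        push_cast
        ring
      rw [hsum]
      exact Submodule.add_mem _ hmem
        (Submodule.sum_mem _ fun i _ =>
          AddSubgroup.zsmul_mem U₀.toAddSubgroup (hcase i) (q i))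
    · intro k
      refine (coordBound _ hxΩ k).trans ?_
      have h1 : ∀ i', |x (f₀ i')| ≤ (H : ℤ) := by
        intro i'
        rw [hxco i']
        rw [abs_of_nonneg (Int.emod_nonneg _ (by positivity))]
        exact (Int.emod_lt_of_pos _ hHpos).le
      refine (Finset.sum_le_sum fun i' _ => h1 i').trans ?_
      rw [Finset.sum_const, Finset.card_univ]
      simp [nsmul_eq_mul]

set_option maxHeartbeats 1000000 in
theorem stmt_17 (N J : ℕ) (hJ : 1 ≤ J) (Ω : Submodule ℤ (Fin N → ℤ))
    (hΩrk : Module.finrank ℤ Ω = J)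
    (U₀ : Submodule ℝ (Fin N → ℝ))
    (hU : ¬ ∀ x ∈ Ω, (fun i => ((x i : ℤ) : ℝ)) ∈ U₀) :
    ∃ x ∈ Ω, (fun i => ((x i : ℤ) : ℝ)) ∉ U₀ ∧
      ∀ k, (|x k| : ℝ) ≤
        (2 * (J : ℝ) ^ J * (3 / 2) ^ (J - 1) + J) * (latticeHeight Ω : ℝ) := by
  push_neg at hU
  obtain ⟨x₀, hx₀Ω, hx₀⟩ := hU
  rcases Nat.eq_zero_or_pos N with hN | hN
  · exfalso
    apply hx₀
    subst hN
    have h0 : (fun i => ((x₀ i : ℤ) : ℝ)) = 0 := funext fun i => i.elim0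
    rw [h0]
    exact U₀.zero_mem
  letI : DecidableEq (Module.Free.ChooseBasisIndex ℤ Ω) :=
    Classical.decEq (Module.Free.ChooseBasisIndex ℤ Ω)
  have hcard : Fintype.card (Module.Free.ChooseBasisIndex ℤ Ω) = J := by
    rw [← hΩrk]
    exact (Module.finrank_eq_card_chooseBasisIndex ℤ Ω).symm
  haveI : Nonempty (Module.Free.ChooseBasisIndex ℤ Ω) := Fintype.card_pos_iff.mp (by omega)
  haveI : Nonempty (Fin N) := ⟨⟨0, hN⟩⟩
  have hdef : latticeHeight Ω = Finset.univ.sup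
      (fun f : Module.Free.ChooseBasisIndex ℤ Ω → Fin N =>
        (Matrix.det (Matrix.of fun i j =>
          ((Module.Free.chooseBasis ℤ Ω j : Fin N → ℤ) (f i)))).natAbs) := rfl
  have hminor : ∀ f : Module.Free.ChooseBasisIndex ℤ Ω → Fin N,
      (Matrix.det (Matrix.of fun i j =>
        ((Module.Free.chooseBasis ℤ Ω j : Fin N → ℤ) (f i)))).natAbs ≤ latticeHeight Ω := by
    intro f
    rw [hdef]
    exact Finset.le_sup (f := fun f => (Matrix.det (Matrix.of fun i j =>
      ((Module.Free.chooseBasis ℤ Ω j : Fin N → ℤ) (f i)))).natAbs) (Finset.mem_univ f)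
  obtain ⟨f₀, -, hf₀⟩ := Finset.exists_mem_eq_sup
    (Finset.univ : Finset (Module.Free.ChooseBasisIndex ℤ Ω → Fin N))
    Finset.univ_nonempty
    (fun f => (Matrix.det (Matrix.of fun i j =>
      ((Module.Free.chooseBasis ℤ Ω j : Fin N → ℤ) (f i)))).natAbs)
  rw [← hdef] at hf₀
  have hli : LinearIndependent ℤ
      (fun j : Module.Free.ChooseBasisIndex ℤ Ω =>
        ((Module.Free.chooseBasis ℤ Ω j : Fin N → ℤ))) :=
    (Module.Free.chooseBasis ℤ Ω).linearIndependent.map'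
      Ω.subtype (Submodule.ker_subtype Ω)
  obtain ⟨fz, hfz⟩ := exists_minor_ne_zero _ hli
  have hH1 : 1 ≤ latticeHeight Ω := by
    have h1 := hminor fz
    have h2 : (Matrix.det (Matrix.of fun i j =>
        ((Module.Free.chooseBasis ℤ Ω j : Fin N → ℤ) (fz i)))).natAbs ≠ 0 :=
      Int.natAbs_ne_zero.mpr hfz
    rcases Nat.eq_zero_or_pos (latticeHeight Ω) with h0 | h0
    · rw [h0] at h1
      exact absurd (Nat.le_zero.mp h1) h2
    · exact h0
  have hgen : ∀ ω ∈ Ω, ∃ a : Module.Free.ChooseBasisIndex ℤ Ω → ℤ,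
      ∀ k, ω k = ∑ j, a j * (Module.Free.chooseBasis ℤ Ω j : Fin N → ℤ) k := by
    intro ω hω
    set b := Module.Free.chooseBasis ℤ Ω with hb
    refine ⟨fun j => b.repr ⟨ω, hω⟩ j, fun k => ?_⟩
    have h1 : ∑ j, b.repr ⟨ω, hω⟩ j • b j = (⟨ω, hω⟩ : Ω) := b.sum_repr ⟨ω, hω⟩
    have h2 := congrArg Subtype.val h1
    rw [Submodule.coe_sum] at h2
    have h3 : ω k = (∑ j, ((b.repr ⟨ω, hω⟩ j • b j : Ω) : Fin N → ℤ)) k := by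
      rw [h2]
    rw [h3, Finset.sum_apply]
    exact Finset.sum_congr rfl fun j _ => by
      rw [Submodule.coe_smul, Pi.smul_apply, smul_eq_mul]
  obtain ⟨x, hxΩ, hxU, hxb⟩ := key_lemma Ω
    (fun j => ((Module.Free.chooseBasis ℤ Ω j : Fin N → ℤ)))
    (fun j => (Module.Free.chooseBasis ℤ Ω j).2) hgen (latticeHeight Ω) hH1
    hminor f₀ hf₀.symm U₀ x₀ hx₀Ω hx₀
  refine ⟨x, hxΩ, hxU, fun k => ?_⟩
  have h1 : (|x k| : ℝ) ≤ ((J : ℝ) * (latticeHeight Ω : ℝ)) := by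
    have h2 := hxb k
    rw [hcard] at h2
    calc (|x k| : ℝ) ≤ (((J : ℤ) * (latticeHeight Ω : ℕ) : ℤ) : ℝ) := by exact_mod_cast h2
      _ = (J : ℝ) * (latticeHeight Ω : ℝ) := by push_cast; ring
  refine h1.trans ?_
  have h2 : (0:ℝ) ≤ 2 * (J : ℝ) ^ J * (3 / 2) ^ (J - 1) * (latticeHeight Ω : ℝ) := by
    positivity
  nlinarith
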